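/- Let R₁ and R₂ be finite (not necessarily unital, not necessarily commutative) rings with subrings S₁ and S₂ respectively. If there exists a ℤ-isoclinism (φ, ψ) from the pair (S₁, R₁) to the pair (S₂, R₂), then Pr(S₁, R₁) = Pr(S₂, R₂). -/

import Mathlib

open scoped Pointwise

/-- The probability that a randomly chosen pair, one element from `S` and one from `T`,
commutes (multiplicatively). For a subring `S` of a finite ring `R` this gives
`Pr(S, R) = relCommProb R S Set.univ`, `Pr(R) = relCommProb R Set.univ Set.univ`, etc. -/
noncomputable def relCommProb (R : Type*) [NonUnitalRing R] (S T : Set R) : ℚ :=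
  (Nat.card {p : S × T // (p.1 : R) * (p.2 : R) = (p.2 : R) * (p.1 : R)} : ℚ) /
    ((Nat.card S : ℚ) * (Nat.card T : ℚ))

/-- `C_S(r)`: the centralizer of `r` in the subring `S`, as an additive subgroup of `R`.
Taking `S = ⊤` gives `C_R(r)`. -/
def centIn {R : Type*} [NonUnitalRing R] (S : NonUnitalSubring R) (r : R) : AddSubgroup R where
  carrier := {x | x ∈ S ∧ x * r = r * x}
  zero_mem' := ⟨S.zero_mem, by rw [zero_mul, mul_zero]⟩
  add_mem' := by
    rintro a b ⟨ha, ha'⟩ ⟨hb, hb'⟩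
    exact ⟨S.add_mem ha hb, by rw [add_mul, mul_add, ha', hb']⟩
  neg_mem' := by
    rintro a ⟨ha, ha'⟩
    exact ⟨S.neg_mem ha, by rw [neg_mul, mul_neg, ha']⟩

/-- `Z(S, R)`: the elements of the subring `S` commuting with every element of `R`,
as an additive subgroup of `R`.  Taking `S = ⊤` gives the center `Z(R)`. -/
def zCenter {R : Type*} [NonUnitalRing R] (S : NonUnitalSubring R) : AddSubgroup R where
  carrier := {x | x ∈ S ∧ ∀ r : R, x * r = r * x}
  zero_mem' := ⟨S.zero_mem, fun r => by rw [zero_mul, mul_zero]⟩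
  add_mem' := by
    rintro a b ⟨ha, ha'⟩ ⟨hb, hb'⟩
    exact ⟨S.add_mem ha hb, fun r => by rw [add_mul, mul_add, ha' r, hb' r]⟩
  neg_mem' := by
    rintro a ⟨ha, ha'⟩
    exact ⟨S.neg_mem ha, fun r => by rw [neg_mul, mul_neg, ha' r]⟩

/-- `K(S, R)`: the set of additive commutators `s*r - r*s` with `s ∈ S`, `r ∈ R`. -/
def kSet {R : Type*} [NonUnitalRing R] (S : NonUnitalSubring R) : Set R :=
  {x | ∃ s ∈ S, ∃ r : R, x = s * r - r * s}

/-- `[S, R]`: the additive subgroup of `(R, +)` generated by `K(S, R)`. -/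
def commSub {R : Type*} [NonUnitalRing R] (S : NonUnitalSubring R) : AddSubgroup R :=
  AddSubgroup.closure (kSet S)

/-- `[x, R]`: the additive subgroup of all commutators `x*y - y*x`, `y ∈ R`. -/
def elemComm {R : Type*} [NonUnitalRing R] (x : R) : AddSubgroup R where
  carrier := {z | ∃ y : R, z = x * y - y * x}
  zero_mem' := ⟨0, by simp⟩
  add_mem' := by
    rintro a b ⟨y, rfl⟩ ⟨z, rfl⟩
    exact ⟨y + z, by rw [mul_add, add_mul]; abel⟩
  neg_mem' := by
    rintro a ⟨y, rfl⟩
    exact ⟨-y, by rw [mul_neg, neg_mul]; abel⟩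
/-- An additive commutator `u*v - v*u` with `u ∈ S` lies in `[S, R]`. -/
lemma comm_mem_commSub {R : Type*} [NonUnitalRing R] (S : NonUnitalSubring R) {u : R}
    (hu : u ∈ S) (v : R) : u * v - v * u ∈ commSub S :=
  AddSubgroup.subset_closure ⟨u, hu, v, rfl⟩

/-- A `ℤ`-isoclinism between the pairs `(S₁, R₁)` and `(S₂, R₂)`: a pair `(φ, ψ)` of additive
group isomorphisms `φ : R₁/Z(S₁, R₁) ≃+ R₂/Z(S₂, R₂)` and `ψ : [S₁, R₁] ≃+ [S₂, R₂]` such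
that `φ` maps `S₁/Z(S₁, R₁)` onto `S₂/Z(S₂, R₂)` and `ψ([u, v]) = [u', v']` whenever
`φ(u + Z(S₁, R₁)) = u' + Z(S₂, R₂)` and `φ(v + Z(S₁, R₁)) = v' + Z(S₂, R₂)` with
`u ∈ S₁`, `u' ∈ S₂`. -/
structure ZIsoclinism {R₁ R₂ : Type*} [NonUnitalRing R₁] [NonUnitalRing R₂]
    (S₁ : NonUnitalSubring R₁) (S₂ : NonUnitalSubring R₂) where
  φ : (R₁ ⧸ zCenter S₁) ≃+ (R₂ ⧸ zCenter S₂)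
  ψ : commSub S₁ ≃+ commSub S₂
  φ_maps : Set.image φ ((QuotientAddGroup.mk : R₁ → R₁ ⧸ zCenter S₁) '' (S₁ : Set R₁)) =
    (QuotientAddGroup.mk : R₂ → R₂ ⧸ zCenter S₂) '' (S₂ : Set R₂)
  compat : ∀ (u : R₁) (hu : u ∈ S₁) (v : R₁) (u' : R₂) (_ : u' ∈ S₂) (v' : R₂),
    φ (QuotientAddGroup.mk u) = QuotientAddGroup.mk u' →
    φ (QuotientAddGroup.mk v) = QuotientAddGroup.mk v' →
    (ψ ⟨u * v - v * u, comm_mem_commSub S₁ hu v⟩ : R₂) = u' * v' - v' * u'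

section AuxCount

variable {A : Type*} [AddCommGroup A]

/-- Counting a `Z`-saturated set via its image in the quotient. -/
lemma card_set_eq_card_image_mul (Z : AddSubgroup A) (T : Set A)
    (hT : ∀ t ∈ T, ∀ z ∈ Z, t + z ∈ T) :
    Nat.card T =
      Nat.card ((QuotientAddGroup.mk : A → A ⧸ Z) '' T) * Nat.card Z := by
  rw [← Nat.card_prod]
  refine (Nat.card_eq_of_bijective
    (fun p : ((QuotientAddGroup.mk : A → A ⧸ Z) '' T) × Z =>
      (⟨p.1.2.choose + p.2.1, hT _ p.1.2.choose_spec.1 _ p.2.2⟩ : T)) ⟨?_, ?_⟩).symm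
  · rintro ⟨⟨a, ha⟩, ⟨z, hz⟩⟩ ⟨⟨b, hb⟩, ⟨w, hw⟩⟩ h
    simp only [Subtype.mk.injEq] at h
    have hab : a = b := by
      have := congrArg (QuotientAddGroup.mk : A → A ⧸ Z) h
      simpa [ha.choose_spec.2, hb.choose_spec.2,
        (QuotientAddGroup.eq_zero_iff z).2 hz, (QuotientAddGroup.eq_zero_iff w).2 hw]
        using this
    subst hab
    have hcc : ha.choose = hb.choose := rfl
    rw [hcc] at h
    have : z = w := by exact add_left_cancel h
    simp [this]
  · rintro ⟨t, ht⟩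
    have hmem : (QuotientAddGroup.mk t : A ⧸ Z) ∈ (QuotientAddGroup.mk : A → A ⧸ Z) '' T :=
      ⟨t, ht, rfl⟩
    refine ⟨⟨⟨QuotientAddGroup.mk t, hmem⟩, ⟨t - hmem.choose, ?_⟩⟩, ?_⟩
    · have : (QuotientAddGroup.mk hmem.choose : A ⧸ Z) = QuotientAddGroup.mk t :=
        hmem.choose_spec.2
      have := (QuotientAddGroup.eq_iff_sub_mem).1 this.symm
      simpa using this
    · apply Subtype.ext
      simp

/-- Counting a `Z × Z`-saturated set of pairs via its image in the quotient. -/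
lemma card_pairs_eq_card_image_mul (Z : AddSubgroup A) (T : Set (A × A))
    (hT : ∀ p ∈ T, ∀ z ∈ Z, ∀ w ∈ Z, (p.1 + z, p.2 + w) ∈ T) :
    Nat.card T =
      Nat.card ((fun p : A × A =>
          ((QuotientAddGroup.mk p.1 : A ⧸ Z), (QuotientAddGroup.mk p.2 : A ⧸ Z))) '' T) *
        (Nat.card Z * Nat.card Z) := by
  classical
  set Pm : A × A → (A ⧸ Z) × (A ⧸ Z) := fun p =>
    ((QuotientAddGroup.mk p.1 : A ⧸ Z), (QuotientAddGroup.mk p.2 : A ⧸ Z)) with hPm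
  rw [← Nat.card_prod, ← Nat.card_prod]
  refine (Nat.card_eq_of_bijective
    (fun p : (Pm '' T) × (Z × Z) =>
      (⟨(p.1.2.choose.1 + p.2.1.1, p.1.2.choose.2 + p.2.2.1),
        hT _ p.1.2.choose_spec.1 _ p.2.1.2 _ p.2.2.2⟩ : T)) ⟨?_, ?_⟩).symm
  · rintro ⟨⟨a, ha⟩, ⟨⟨z, hz⟩, ⟨w, hw⟩⟩⟩ ⟨⟨b, hb⟩, ⟨⟨z', hz'⟩, ⟨w', hw'⟩⟩⟩ h
    simp only [Subtype.mk.injEq, Prod.mk.injEq] at h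
    obtain ⟨h1, h2⟩ := h
    have hq1 : QuotientAddGroup.mk (ha.choose.1 + z) = (QuotientAddGroup.mk (hb.choose.1 + z') : A ⧸ Z) :=
      congrArg _ h1
    have hq2 : QuotientAddGroup.mk (ha.choose.2 + w) = (QuotientAddGroup.mk (hb.choose.2 + w') : A ⧸ Z) :=
      congrArg _ h2
    have ea1 : (QuotientAddGroup.mk ha.choose.1 : A ⧸ Z) = a.1 :=
      congrArg Prod.fst ha.choose_spec.2
    have ea2 : (QuotientAddGroup.mk ha.choose.2 : A ⧸ Z) = a.2 :=
      congrArg Prod.snd ha.choose_spec.2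
    have eb1 : (QuotientAddGroup.mk hb.choose.1 : A ⧸ Z) = b.1 :=
      congrArg Prod.fst hb.choose_spec.2
    have eb2 : (QuotientAddGroup.mk hb.choose.2 : A ⧸ Z) = b.2 :=
      congrArg Prod.snd hb.choose_spec.2
    have hab : a = b := by
      have k1 : a.1 = b.1 := by
        simpa [ea1, eb1, (QuotientAddGroup.eq_zero_iff z).2 hz,
          (QuotientAddGroup.eq_zero_iff z').2 hz'] using hq1
      have k2 : a.2 = b.2 := by
        simpa [ea2, eb2, (QuotientAddGroup.eq_zero_iff w).2 hw,
          (QuotientAddGroup.eq_zero_iff w').2 hw'] using hq2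
      exact Prod.ext k1 k2
    subst hab
    have hcc : ha.choose = hb.choose := rfl
    rw [hcc] at h1 h2
    have hzz : z = z' := add_left_cancel h1
    have hww : w = w' := add_left_cancel h2
    simp [hzz, hww]
  · rintro ⟨t, ht⟩
    have hmem : Pm t ∈ Pm '' T := ⟨t, ht, rfl⟩
    have e1 : (QuotientAddGroup.mk hmem.choose.1 : A ⧸ Z) = QuotientAddGroup.mk t.1 :=
      congrArg Prod.fst hmem.choose_spec.2
    have e2 : (QuotientAddGroup.mk hmem.choose.2 : A ⧸ Z) = QuotientAddGroup.mk t.2 :=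
      congrArg Prod.snd hmem.choose_spec.2
    refine ⟨⟨⟨Pm t, hmem⟩, ⟨⟨t.1 - hmem.choose.1, ?_⟩, ⟨t.2 - hmem.choose.2, ?_⟩⟩⟩, ?_⟩
    · have := (QuotientAddGroup.eq_iff_sub_mem).1 e1.symm
      simpa using this
    · have := (QuotientAddGroup.eq_iff_sub_mem).1 e2.symm
      simpa using this
    · apply Subtype.ext
      simp

end AuxCount

/-- The set of commuting pairs `(s, r)` with `s ∈ S`. -/
def commPairs {R : Type*} [NonUnitalRing R] (S : NonUnitalSubring R) : Set (R × R) :=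
  {p | p.1 ∈ S ∧ p.1 * p.2 = p.2 * p.1}

lemma relCommProb_eq_commPairs {R : Type*} [NonUnitalRing R] (S : NonUnitalSubring R) :
    relCommProb R (S : Set R) Set.univ =
      (Nat.card (commPairs S) : ℚ) /
        ((Nat.card (S : Set R) : ℚ) * (Nat.card (Set.univ : Set R) : ℚ)) := by
  unfold relCommProb
  congr 1
  rw [Nat.card_eq_of_bijective
    (fun p : {p : ↥(S : Set R) × ↥(Set.univ : Set R) //
        (p.1 : R) * (p.2 : R) = (p.2 : R) * (p.1 : R)} =>
      (⟨((p.1.1 : R), (p.1.2 : R)), p.1.1.2, p.2⟩ : commPairs S)) ⟨?_, ?_⟩]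
  · rintro ⟨⟨⟨s, hs⟩, ⟨r, hr⟩⟩, h⟩ ⟨⟨⟨s', hs'⟩, ⟨r', hr'⟩⟩, h'⟩ hh
    simp only [Subtype.mk.injEq, Prod.mk.injEq] at hh
    obtain ⟨h1, h2⟩ := hh
    rfl
  · rintro ⟨⟨s, r⟩, hs, h⟩
    exact ⟨⟨(⟨s, hs⟩, ⟨r, trivial⟩), h⟩, rfl⟩

lemma commPairs_saturated {R : Type*} [NonUnitalRing R] (S : NonUnitalSubring R) :
    ∀ p ∈ commPairs S, ∀ z ∈ zCenter S, ∀ w ∈ zCenter S,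
      (p.1 + z, p.2 + w) ∈ commPairs S := by
  intro p hp z hz w hw
  obtain ⟨hp1, hp2⟩ := hp
  refine ⟨S.add_mem hp1 hz.1, ?_⟩
  have hz' := hz.2
  have hw' := hw.2
  simp only [add_mul, mul_add]
  rw [hp2, hz' p.2, hw' p.1, hz' w, hw' z]
  abel

set_option maxHeartbeats 1000000 in
/-- If there is a `ℤ`-isoclinism from `(S₁, R₁)` to `(S₂, R₂)`, where `S₁, S₂` are subrings
of the finite rings `R₁, R₂`, then `Pr(S₁, R₁) = Pr(S₂, R₂)`. -/
theorem relCommProb_eq_of_zIsoclinism {R₁ R₂ : Type*} [NonUnitalRing R₁] [NonUnitalRing R₂]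
    [Fintype R₁] [Fintype R₂] (S₁ : NonUnitalSubring R₁) (S₂ : NonUnitalSubring R₂)
    (e : Nonempty (ZIsoclinism S₁ S₂)) :
    relCommProb R₁ (S₁ : Set R₁) Set.univ = relCommProb R₂ (S₂ : Set R₂) Set.univ := by
  classical
  obtain ⟨e⟩ := e
  -- notation
  set Pm₁ : R₁ × R₁ → (R₁ ⧸ (zCenter S₁)) × (R₁ ⧸ (zCenter S₁)) := fun p =>
    ((QuotientAddGroup.mk p.1 : R₁ ⧸ (zCenter S₁)), (QuotientAddGroup.mk p.2 : R₁ ⧸ (zCenter S₁))) with hPm₁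
  set Pm₂ : R₂ × R₂ → (R₂ ⧸ (zCenter S₂)) × (R₂ ⧸ (zCenter S₂)) := fun p =>
    ((QuotientAddGroup.mk p.1 : R₂ ⧸ (zCenter S₂)), (QuotientAddGroup.mk p.2 : R₂ ⧸ (zCenter S₂))) with hPm₂
  -- counts via quotients
  have hcard₁ : Nat.card (commPairs S₁) =
      Nat.card (Pm₁ '' commPairs S₁) * (Nat.card (zCenter S₁) * Nat.card (zCenter S₁)) :=
    card_pairs_eq_card_image_mul (zCenter S₁) (commPairs S₁) (commPairs_saturated S₁)
  have hcard₂ : Nat.card (commPairs S₂) =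
      Nat.card (Pm₂ '' commPairs S₂) * (Nat.card (zCenter S₂) * Nat.card (zCenter S₂)) :=
    card_pairs_eq_card_image_mul (zCenter S₂) (commPairs S₂) (commPairs_saturated S₂)
  have hS₁ : Nat.card (S₁ : Set R₁) =
      Nat.card ((QuotientAddGroup.mk : R₁ → R₁ ⧸ (zCenter S₁)) '' (S₁ : Set R₁)) * Nat.card (zCenter S₁) :=
    card_set_eq_card_image_mul (zCenter S₁) (S₁ : Set R₁) (fun t ht z hz => S₁.add_mem ht hz.1)
  have hS₂ : Nat.card (S₂ : Set R₂) =
      Nat.card ((QuotientAddGroup.mk : R₂ → R₂ ⧸ (zCenter S₂)) '' (S₂ : Set R₂)) * Nat.card (zCenter S₂) :=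
    card_set_eq_card_image_mul (zCenter S₂) (S₂ : Set R₂) (fun t ht z hz => S₂.add_mem ht hz.1)
  have hU₁ : Nat.card (Set.univ : Set R₁) = Nat.card (R₁ ⧸ (zCenter S₁)) * Nat.card (zCenter S₁) := by
    have h := card_set_eq_card_image_mul (zCenter S₁) (Set.univ : Set R₁) (fun t _ z _ => trivial)
    rw [Set.image_univ, Set.range_eq_univ.2 QuotientAddGroup.mk_surjective] at h
    rw [h, Nat.card_univ]
  have hU₂ : Nat.card (Set.univ : Set R₂) = Nat.card (R₂ ⧸ (zCenter S₂)) * Nat.card (zCenter S₂) := by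
    have h := card_set_eq_card_image_mul (zCenter S₂) (Set.univ : Set R₂) (fun t _ z _ => trivial)
    rw [Set.image_univ, Set.range_eq_univ.2 QuotientAddGroup.mk_surjective] at h
    rw [h, Nat.card_univ]
  -- transport of the quotient-level data along the isoclinism
  have key : (fun q : (R₁ ⧸ (zCenter S₁)) × (R₁ ⧸ (zCenter S₁)) => (e.φ q.1, e.φ q.2)) '' (Pm₁ '' commPairs S₁) =
      Pm₂ '' commPairs S₂ := by
    ext q
    constructor
    · rintro ⟨-, ⟨⟨s, r⟩, ⟨hs, hsr⟩, rfl⟩, rfl⟩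
      have hφs : e.φ (QuotientAddGroup.mk s) ∈
          (QuotientAddGroup.mk : R₂ → R₂ ⧸ (zCenter S₂)) '' (S₂ : Set R₂) := by
        rw [← e.φ_maps]
        exact ⟨QuotientAddGroup.mk s, ⟨s, hs, rfl⟩, rfl⟩
      obtain ⟨s', hs', hmks'⟩ := hφs
      obtain ⟨r', hmkr'⟩ := QuotientAddGroup.mk_surjective (e.φ (QuotientAddGroup.mk r))
      have hc := e.compat s hs r s' hs' r' hmks'.symm hmkr'.symm
      have hzero : (⟨s * r - r * s, comm_mem_commSub S₁ hs r⟩ : commSub S₁) = 0 := by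
        apply Subtype.ext
        simpa using sub_eq_zero_of_eq hsr
      rw [hzero, map_zero] at hc
      have hcomm' : s' * r' = r' * s' := by
        have := hc.symm
        exact sub_eq_zero.1 (by simpa using this)
      exact ⟨(s', r'), ⟨hs', hcomm'⟩, by simp [hPm₁, hPm₂, hmks', hmkr']⟩
    · rintro ⟨⟨s', r'⟩, ⟨hs', hsr'⟩, rfl⟩
      have hφs : e.φ.symm (QuotientAddGroup.mk s') ∈
          (QuotientAddGroup.mk : R₁ → R₁ ⧸ (zCenter S₁)) '' (S₁ : Set R₁) := by
        have : (QuotientAddGroup.mk s' : R₂ ⧸ (zCenter S₂)) ∈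
            Set.image e.φ ((QuotientAddGroup.mk : R₁ → R₁ ⧸ (zCenter S₁)) '' (S₁ : Set R₁)) := by
          rw [e.φ_maps]; exact ⟨s', hs', rfl⟩
        obtain ⟨a, ha, hfa⟩ := this
        rw [← hfa, AddEquiv.symm_apply_apply]
        exact ha
      obtain ⟨s, hs, hmks⟩ := hφs
      obtain ⟨r, hmkr⟩ := QuotientAddGroup.mk_surjective (e.φ.symm (QuotientAddGroup.mk r'))
      have hφmks : e.φ (QuotientAddGroup.mk s) = QuotientAddGroup.mk s' := by
        rw [hmks, AddEquiv.apply_symm_apply]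
      have hφmkr : e.φ (QuotientAddGroup.mk r) = QuotientAddGroup.mk r' := by
        rw [hmkr, AddEquiv.apply_symm_apply]
      have hc := e.compat s hs r s' hs' r' hφmks hφmkr
      have hc0 : (e.ψ ⟨s * r - r * s, comm_mem_commSub S₁ hs r⟩ : R₂) = 0 := by
        rw [hc]; exact sub_eq_zero_of_eq hsr'
      have hx0 : (⟨s * r - r * s, comm_mem_commSub S₁ hs r⟩ : commSub S₁) = 0 := by
        apply e.ψ.injective
        rw [map_zero]
        exact Subtype.ext hc0
      have hsr : s * r = r * s := sub_eq_zero.1 (congrArg Subtype.val hx0)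
      exact ⟨Pm₁ (s, r), ⟨(s, r), ⟨hs, hsr⟩, rfl⟩, by simp [hPm₁, hPm₂, hφmks, hφmkr]⟩
  -- equal cardinalities at quotient level
  have hMeq : Nat.card (Pm₁ '' commPairs S₁) = Nat.card (Pm₂ '' commPairs S₂) := by
    rw [← key]
    exact (Nat.card_image_of_injective
      ((Equiv.prodCongr e.φ.toEquiv e.φ.toEquiv).injective) _).symm
  have hQSeq : Nat.card ((QuotientAddGroup.mk : R₁ → R₁ ⧸ (zCenter S₁)) '' (S₁ : Set R₁)) =
      Nat.card ((QuotientAddGroup.mk : R₂ → R₂ ⧸ (zCenter S₂)) '' (S₂ : Set R₂)) := by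
    rw [← e.φ_maps]
    exact (Nat.card_image_of_injective e.φ.injective _).symm
  have hQReq : Nat.card (R₁ ⧸ (zCenter S₁)) = Nat.card (R₂ ⧸ (zCenter S₂)) := Nat.card_congr e.φ.toEquiv
  -- nonvanishing
  have hz₁ : (Nat.card (zCenter S₁) : ℚ) ≠ 0 := by
    exact_mod_cast (Nat.card_pos (α := (zCenter S₁))).ne'
  have hz₂ : (Nat.card (zCenter S₂) : ℚ) ≠ 0 := by
    exact_mod_cast (Nat.card_pos (α := (zCenter S₂))).ne'
  -- final computation
  have haux : ∀ (M a b z : ℚ), z ≠ 0 → (M * (z * z)) / ((a * z) * (b * z)) = M / (a * b) := by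
    intro M a b z hz
    rw [show (a * z) * (b * z) = (a * b) * (z * z) by ring,
      mul_div_mul_right _ _ (mul_ne_zero hz hz)]
  rw [relCommProb_eq_commPairs S₁, relCommProb_eq_commPairs S₂,
    hcard₁, hcard₂, hS₁, hS₂, hU₁, hU₂, hMeq, hQSeq, hQReq]
  simp only [Nat.cast_mul]
  rw [haux _ _ _ _ hz₁, haux _ _ _ _ hz₂]
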